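/- Contraction step of the Alternating Block Algorithm: Let C₂ ∈ ℝ^{J×J} be symmetric positive definite with C₂ᵀC₂ equal to the symmetric part matrix C + (1/2)(reᵀ+erᵀ), and suppose x^{k+1}, x* ∈ ℝ^J satisfy 0 ≤ x^{k+1} ⟂ (C+reᵀ)x^{k+1} − s̄^k + a ≥ 0 and 0 ≤ x* ⟂ (C+reᵀ)x* − s̄* + a ≥ 0 for vectors s̄^k, s̄* ∈ ℝ^J. Then ‖C₂(x^{k+1} − x*)‖ ≤ ‖C₂^{-1}‖ · ‖s̄^k − s̄*‖. -/

import Mathlib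

open Matrix

/-- Euclidean norm of a vector in `ℝ^J`. -/
noncomputable def sqnorm {J : ℕ} (v : Fin J → ℝ) : ℝ := Real.sqrt (∑ i, (v i)^2)

/-- Spectral (operator 2-) norm of a matrix. -/
noncomputable def spec {J : ℕ} (A : Matrix (Fin J) (Fin J) ℝ) : ℝ :=
  sSup {c | ∃ v : Fin J → ℝ, sqnorm v ≤ 1 ∧ c = sqnorm (A.mulVec v)}


lemma sqnorm_eq_norm {J : ℕ} (v : Fin J → ℝ) :
    sqnorm v = ‖(WithLp.equiv 2 (Fin J → ℝ)).symm v‖ := by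
  rw [EuclideanSpace.norm_eq]
  simp [sqnorm, Real.norm_eq_abs, sq_abs]

lemma sqnorm_nonneg {J : ℕ} (v : Fin J → ℝ) : 0 ≤ sqnorm v := Real.sqrt_nonneg _

lemma sqnorm_smul {J : ℕ} (t : ℝ) (v : Fin J → ℝ) : sqnorm (t • v) = |t| * sqnorm v := by
  rw [sqnorm_eq_norm, sqnorm_eq_norm, WithLp.equiv_symm_apply, WithLp.toLp_smul, norm_smul, Real.norm_eq_abs]

lemma dot_self_eq {J : ℕ} (v : Fin J → ℝ) : v ⬝ᵥ v = sqnorm v ^ 2 := by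
  rw [sqnorm, Real.sq_sqrt (by positivity)]
  simp [dotProduct, pow_two]

lemma spec_bdd {J : ℕ} (A : Matrix (Fin J) (Fin J) ℝ) :
    BddAbove {c | ∃ v : Fin J → ℝ, sqnorm v ≤ 1 ∧ c = sqnorm (A.mulVec v)} := by
  refine ⟨‖Matrix.toEuclideanCLM (𝕜 := ℝ) A‖, ?_⟩
  rintro c ⟨w, hw, rfl⟩
  have h1 : sqnorm (A.mulVec w)
      = ‖Matrix.toEuclideanCLM (𝕜 := ℝ) A ((WithLp.equiv 2 (Fin J → ℝ)).symm w)‖ := by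
    rw [sqnorm_eq_norm, WithLp.equiv_symm_apply, Matrix.toEuclideanCLM_toLp]
  rw [h1]
  calc ‖Matrix.toEuclideanCLM (𝕜 := ℝ) A ((WithLp.equiv 2 (Fin J → ℝ)).symm w)‖
      ≤ ‖Matrix.toEuclideanCLM (𝕜 := ℝ) A‖ * ‖(WithLp.equiv 2 (Fin J → ℝ)).symm w‖ :=
        (Matrix.toEuclideanCLM (𝕜 := ℝ) A).le_opNorm _
    _ ≤ ‖Matrix.toEuclideanCLM (𝕜 := ℝ) A‖ * 1 := by
        apply mul_le_mul_of_nonneg_left _ (norm_nonneg _)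
        rwa [← sqnorm_eq_norm]
    _ = _ := mul_one _

lemma spec_nonneg {J : ℕ} (A : Matrix (Fin J) (Fin J) ℝ) : 0 ≤ spec A := by
  have : (0 : ℝ) ∈ {c | ∃ v : Fin J → ℝ, sqnorm v ≤ 1 ∧ c = sqnorm (A.mulVec v)} := by
    refine ⟨0, ?_, ?_⟩ <;> simp [sqnorm]
  exact le_csSup (spec_bdd A) this

lemma sqnorm_mulVec_le {J : ℕ} (A : Matrix (Fin J) (Fin J) ℝ) (v : Fin J → ℝ) :
    sqnorm (A.mulVec v) ≤ spec A * sqnorm v := by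
  rcases eq_or_ne v 0 with rfl | hv
  · simp [sqnorm, Matrix.mulVec_zero]
  · have hvpos : 0 < sqnorm v := by
      rw [sqnorm_eq_norm]
      have : (WithLp.equiv 2 (Fin J → ℝ)).symm v ≠ 0 := by
        simpa using hv
      exact norm_pos_iff.mpr this
    have hu : sqnorm ((sqnorm v)⁻¹ • v) = 1 := by
      rw [sqnorm_smul, abs_of_pos (inv_pos.mpr hvpos), inv_mul_cancel₀ hvpos.ne']
    have hmem : sqnorm (A.mulVec ((sqnorm v)⁻¹ • v))
        ∈ {c | ∃ w : Fin J → ℝ, sqnorm w ≤ 1 ∧ c = sqnorm (A.mulVec w)} :=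
      ⟨_, hu.le, rfl⟩
    have hle := le_csSup (spec_bdd A) hmem
    rw [Matrix.mulVec_smul, sqnorm_smul, abs_of_pos (inv_pos.mpr hvpos)] at hle
    have := mul_le_mul_of_nonneg_right hle hvpos.le
    rw [inv_mul_eq_div, div_mul_cancel₀ _ hvpos.ne'] at this
    exact this.trans_eq rfl

lemma vecMulVec_mulVec' {J : ℕ} (u w d : Fin J → ℝ) :
    (Matrix.vecMulVec u w).mulVec d = (w ⬝ᵥ d) • u := by
  ext i
  simp only [Matrix.mulVec, dotProduct, Matrix.vecMulVec_apply, Pi.smul_apply, smul_eq_mul,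
    Finset.sum_mul]
  exact Finset.sum_congr rfl fun j _ => by ring

/-- contraction step of the ABA. If `C₂ᵀC₂` equals the symmetric part
`C + (1/2)(reᵀ + erᵀ)` with `C₂` symmetric positive definite, and `x^{k+1}`, `x*`
solve the two complementarity problems, then
`‖C₂(x^{k+1} − x*)‖ ≤ ‖C₂⁻¹‖ ‖s̄^k − s̄*‖`. -/
theorem stmt15 {J : ℕ} (c r a : Fin J → ℝ) (hc : ∀ i, 0 < c i)
    (C₂ : Matrix (Fin J) (Fin J) ℝ) (hC₂ : C₂.PosDef)
    (hC₂sq : C₂ᵀ * C₂ = Matrix.diagonal c +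
      (1/2 : ℝ) • (Matrix.vecMulVec r 1 + Matrix.vecMulVec 1 r))
    (x1 xstar sk ss : Fin J → ℝ)
    (h1pos : ∀ i, 0 ≤ x1 i)
    (h1feas : ∀ i, 0 ≤ ((Matrix.diagonal c + Matrix.vecMulVec r 1).mulVec x1 - sk + a) i)
    (h1comp : x1 ⬝ᵥ ((Matrix.diagonal c + Matrix.vecMulVec r 1).mulVec x1 - sk + a) = 0)
    (hspos : ∀ i, 0 ≤ xstar i)
    (hsfeas : ∀ i,
      0 ≤ ((Matrix.diagonal c + Matrix.vecMulVec r 1).mulVec xstar - ss + a) i)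
    (hscomp :
      xstar ⬝ᵥ ((Matrix.diagonal c + Matrix.vecMulVec r 1).mulVec xstar - ss + a) = 0) :
    sqnorm (C₂.mulVec (x1 - xstar)) ≤ spec C₂⁻¹ * sqnorm (sk - ss) := by

  set M := Matrix.diagonal c + Matrix.vecMulVec r 1 with hM
  set d := x1 - xstar with hd
  -- Step A: complementarity inequality
  have h1 : 0 ≤ x1 ⬝ᵥ (M.mulVec xstar - ss + a) :=
    Finset.sum_nonneg fun i _ => mul_nonneg (h1pos i) (hsfeas i)
  have h2 : 0 ≤ xstar ⬝ᵥ (M.mulVec x1 - sk + a) :=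
    Finset.sum_nonneg fun i _ => mul_nonneg (hspos i) (h1feas i)
  have hexp : d ⬝ᵥ (M.mulVec d) - d ⬝ᵥ (sk - ss)
      = x1 ⬝ᵥ (M.mulVec x1 - sk + a) + xstar ⬝ᵥ (M.mulVec xstar - ss + a)
        - x1 ⬝ᵥ (M.mulVec xstar - ss + a) - xstar ⬝ᵥ (M.mulVec x1 - sk + a) := by
    simp only [hd, Matrix.mulVec_sub, dotProduct_sub, sub_dotProduct, dotProduct_add]
    ring
  have hA : d ⬝ᵥ (M.mulVec d) ≤ d ⬝ᵥ (sk - ss) := by linarith [hexp, h1, h2, h1comp, hscomp]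
  -- Step B: quadratic form equals symmetric-part form
  have hB : d ⬝ᵥ (M.mulVec d) = d ⬝ᵥ ((C₂ᵀ * C₂).mulVec d) := by
    rw [hC₂sq, hM]
    simp only [Matrix.add_mulVec, dotProduct_add, Matrix.smul_mulVec, dotProduct_smul,
      Matrix.add_mulVec, vecMulVec_mulVec', dotProduct_smul, smul_eq_mul]
    rw [dotProduct_comm (1 : Fin J → ℝ) d, dotProduct_comm r d]
    ring
  -- Step C: symmetric-part form is the squared norm
  have hCeq : d ⬝ᵥ ((C₂ᵀ * C₂).mulVec d) = sqnorm (C₂.mulVec d) ^ 2 := by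
    rw [← Matrix.mulVec_mulVec, Matrix.dotProduct_mulVec, Matrix.vecMul_transpose]
    exact dot_self_eq _
  -- Step D: Cauchy-Schwarz
  have hD : d ⬝ᵥ (sk - ss) ≤ sqnorm d * sqnorm (sk - ss) := by
    have hinner : d ⬝ᵥ (sk - ss)
        = inner ℝ ((WithLp.equiv 2 (Fin J → ℝ)).symm d)
            ((WithLp.equiv 2 (Fin J → ℝ)).symm (sk - ss)) := by
      simp [PiLp.inner_apply, dotProduct, RCLike.inner_apply, mul_comm]
    rw [hinner, sqnorm_eq_norm, sqnorm_eq_norm]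
    exact real_inner_le_norm _ _
  -- Step E: recover d from C₂ d
  have hdet : IsUnit C₂.det := isUnit_iff_ne_zero.mpr hC₂.det_pos.ne'
  have hE : sqnorm d ≤ spec C₂⁻¹ * sqnorm (C₂.mulVec d) := by
    have : C₂⁻¹.mulVec (C₂.mulVec d) = d := by
      rw [Matrix.mulVec_mulVec, Matrix.nonsing_inv_mul _ hdet, Matrix.one_mulVec]
    calc sqnorm d = sqnorm (C₂⁻¹.mulVec (C₂.mulVec d)) := by rw [this]
      _ ≤ spec C₂⁻¹ * sqnorm (C₂.mulVec d) := sqnorm_mulVec_le _ _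
  -- Combine
  have hNn := sqnorm_nonneg (C₂.mulVec d)
  have hΔ := sqnorm_nonneg (sk - ss)
  have hs := spec_nonneg C₂⁻¹
  have key : sqnorm (C₂.mulVec d) ^ 2
      ≤ spec C₂⁻¹ * sqnorm (C₂.mulVec d) * sqnorm (sk - ss) := by
    have := mul_le_mul_of_nonneg_right hE hΔ
    nlinarith [hA, hB, hCeq, hD]
  rcases eq_or_lt_of_le hNn with hN | hN
  · rw [← hN]; positivity
  · nlinarith [key, hN]
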